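/- Let K be a field of characteristic zero, let R = K[[x,y]] be the formal power series ring in two variables over K, and let I be a monomial ideal of R of finite colength. Suppose that σ(I) = I for every K-algebra automorphism σ of R. Then I is a power of the maximal ideal: I = (x,y)^d for some non-negative integer d. -/

import Mathlib

noncomputable section
open MvPowerSeries MvPolynomial

def emb2 (p : ℕ × ℕ) : Fin 2 →₀ ℕ := Finsupp.single 0 p.1 + Finsupp.single 1 p.2
@[simp] lemma emb2_apply0 (p : ℕ × ℕ) : emb2 p 0 = p.1 := by simp [emb2, Finsupp.single_apply]
@[simp] lemma emb2_apply1 (p : ℕ × ℕ) : emb2 p 1 = p.2 := by simp [emb2, Finsupp.single_apply]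
lemma emb2_eta (e : Fin 2 →₀ ℕ) : emb2 (e 0, e 1) = e := by
  ext i
  match i with
  | 0 => simp
  | 1 => simp
lemma emb2_eq_iff (p : ℕ × ℕ) (e : Fin 2 →₀ ℕ) : emb2 p = e ↔ p = (e 0, e 1) := by
  constructor
  · rintro rfl; simp
  · rintro rfl; exact emb2_eta e
lemma degree_fin2 (e : Fin 2 →₀ ℕ) : e.degree = e 0 + e 1 := by
  rw [Finsupp.degree_apply, Finset.sum_subset (Finset.subset_univ e.support)
    (fun x _ hx => by simpa [Finsupp.mem_support_iff] using hx)]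
  exact Fin.sum_univ_two e
@[simp] lemma degree_emb2 (p : ℕ × ℕ) : (emb2 p).degree = p.1 + p.2 := by
  rw [degree_fin2]; simp
lemma degree_add_fin2 (u v : Fin 2 →₀ ℕ) : (u + v).degree = u.degree + v.degree := by
  simp only [degree_fin2, Finsupp.add_apply]; ring

variable (K : Type*) [Field K]

def homPart (f : MvPowerSeries (Fin 2) K) (n : ℕ) : MvPolynomial (Fin 2) K :=
  ∑ p ∈ Finset.HasAntidiagonal.antidiagonal n,
    MvPolynomial.monomial (emb2 p) (MvPowerSeries.coeff (emb2 p) f)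

lemma coeff_homPart (f : MvPowerSeries (Fin 2) K) (n : ℕ) (e : Fin 2 →₀ ℕ) :
    MvPolynomial.coeff e (homPart K f n) =
      if e.degree = n then MvPowerSeries.coeff e f else 0 := by
  classical
  rw [homPart, MvPolynomial.coeff_sum]
  simp only [MvPolynomial.coeff_monomial, emb2_eq_iff]
  rw [Finset.sum_ite_eq' (Finset.HasAntidiagonal.antidiagonal n) (e 0, e 1)
    (fun p => MvPowerSeries.coeff (emb2 p) f)]
  simp only [Finset.HasAntidiagonal.mem_antidiagonal, emb2_eta, ← degree_fin2]

lemma homPart_isHomogeneous (f : MvPowerSeries (Fin 2) K) (n : ℕ) :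
    (homPart K f n).IsHomogeneous n := by
  apply MvPolynomial.IsHomogeneous.sum
  intro p hp
  apply MvPolynomial.isHomogeneous_monomial
  rw [degree_emb2]
  exact Finset.HasAntidiagonal.mem_antidiagonal.1 hp

lemma homPart_add (f g : MvPowerSeries (Fin 2) K) (n : ℕ) :
    homPart K (f + g) n = homPart K f n + homPart K g n := by
  ext e
  simp only [coeff_homPart, map_add, MvPolynomial.coeff_add]
  split_ifs <;> simp

lemma homPart_C (a : K) (n : ℕ) :
    homPart K (MvPowerSeries.C a) n =
      if n = 0 then MvPolynomial.C a else 0 := by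
  classical
  ext e
  rw [coeff_homPart, MvPowerSeries.coeff_C]
  by_cases hn : n = 0
  · subst hn
    simp only [if_pos rfl, MvPolynomial.coeff_C, Finsupp.degree_eq_zero_iff]
    split_ifs <;> simp_all [eq_comm]
  · rw [if_neg hn]
    simp only [MvPolynomial.coeff_zero]
    split_ifs with h1 h2
    · exact absurd (h2 ▸ h1.symm) (by simpa [h2] using hn)
    · rfl
    · rfl

lemma homPart_mul (f g : MvPowerSeries (Fin 2) K) (n : ℕ) :
    homPart K (f * g) n =
      ∑ q ∈ Finset.HasAntidiagonal.antidiagonal n, homPart K f q.1 * homPart K g q.2 := by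
  classical
  ext e
  rw [coeff_homPart, MvPolynomial.coeff_sum]
  simp only [MvPolynomial.coeff_mul, coeff_homPart]
  rw [Finset.sum_comm, MvPowerSeries.coeff_mul]
  have key : ∀ uv ∈ Finset.HasAntidiagonal.antidiagonal e,
      (∑ q ∈ Finset.HasAntidiagonal.antidiagonal n,
        (if (uv.1 : Fin 2 →₀ ℕ).degree = q.1 then MvPowerSeries.coeff uv.1 f else 0) *
        (if (uv.2 : Fin 2 →₀ ℕ).degree = q.2 then MvPowerSeries.coeff uv.2 g else 0)) =
      if e.degree = n then MvPowerSeries.coeff uv.1 f * MvPowerSeries.coeff uv.2 g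
      else 0 := by
    rintro ⟨u, v⟩ huv
    have hd : u.degree + v.degree = e.degree := by
      rw [← Finset.HasAntidiagonal.mem_antidiagonal.mp huv, degree_add_fin2]
    have step : ∀ q : ℕ × ℕ,
        (if u.degree = q.1 then MvPowerSeries.coeff u f else 0) *
        (if v.degree = q.2 then MvPowerSeries.coeff v g else 0) =
        if q = (u.degree, v.degree) then
          MvPowerSeries.coeff u f * MvPowerSeries.coeff v g else 0 := by
      rintro ⟨a, b⟩
      by_cases h1 : u.degree = a
      · by_cases h2 : v.degree = b
        · subst h1; subst h2; simp
        · rw [if_neg h2, mul_zero, if_neg fun h => h2 (congrArg Prod.snd h).symm]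
      · rw [if_neg h1, zero_mul, if_neg fun h => h1 (congrArg Prod.fst h).symm]
    simp only [step]
    rw [Finset.sum_ite_eq' (Finset.HasAntidiagonal.antidiagonal n) (u.degree, v.degree)]
    simp only [Finset.HasAntidiagonal.mem_antidiagonal, hd]
  rw [Finset.sum_congr rfl key]
  by_cases h : e.degree = n <;> simp [h]

def phiFun (g : Fin 2 → MvPolynomial (Fin 2) K) (f : MvPowerSeries (Fin 2) K) :
    MvPowerSeries (Fin 2) K :=
  fun e => MvPolynomial.coeff e (MvPolynomial.aeval g (homPart K f e.degree))

lemma coeff_phiFun (g : Fin 2 → MvPolynomial (Fin 2) K) (f : MvPowerSeries (Fin 2) K)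
    (e : Fin 2 →₀ ℕ) :
    MvPowerSeries.coeff e (phiFun K g f) =
      MvPolynomial.coeff e (MvPolynomial.aeval g (homPart K f e.degree)) := rfl

lemma aeval_homPart_isHomogeneous {g : Fin 2 → MvPolynomial (Fin 2) K}
    (hg : ∀ i, (g i).IsHomogeneous 1) (f : MvPowerSeries (Fin 2) K) (n : ℕ) :
    (MvPolynomial.aeval g (homPart K f n)).IsHomogeneous n := by
  simpa using (homPart_isHomogeneous K f n).aeval g hg

lemma phiFun_add (g : Fin 2 → MvPolynomial (Fin 2) K) (f h : MvPowerSeries (Fin 2) K) :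
    phiFun K g (f + h) = phiFun K g f + phiFun K g h := by
  ext e
  simp [coeff_phiFun, homPart_add, map_add]

lemma phiFun_C (g : Fin 2 → MvPolynomial (Fin 2) K) (a : K) :
    phiFun K g (MvPowerSeries.C a) = MvPowerSeries.C a := by
  classical
  ext e
  rw [coeff_phiFun, homPart_C, MvPowerSeries.coeff_C]
  by_cases h : e.degree = 0
  · have he : e = 0 := (Finsupp.degree_eq_zero_iff e).1 h
    rw [h, if_pos rfl, if_pos he, MvPolynomial.aeval_C, MvPolynomial.algebraMap_eq,
      MvPolynomial.coeff_C, if_pos he.symm]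
  · have he : ¬ e = 0 := fun hh => h (by simp [hh])
    rw [if_neg (fun hh : e.degree = 0 => h hh), if_neg he, map_zero,
      MvPolynomial.coeff_zero]

lemma phiFun_mul {g : Fin 2 → MvPolynomial (Fin 2) K} (hg : ∀ i, (g i).IsHomogeneous 1)
    (f h : MvPowerSeries (Fin 2) K) :
    phiFun K g (f * h) = phiFun K g f * phiFun K g h := by
  classical
  ext e
  rw [coeff_phiFun, homPart_mul, map_sum, MvPowerSeries.coeff_mul,
    MvPolynomial.coeff_sum]
  simp only [map_mul, MvPolynomial.coeff_mul]
  rw [Finset.sum_comm]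
  apply Finset.sum_congr rfl
  rintro ⟨u, v⟩ huv
  have hd : u.degree + v.degree = e.degree := by
    rw [← Finset.HasAntidiagonal.mem_antidiagonal.mp huv, degree_add_fin2]
  rw [coeff_phiFun, coeff_phiFun]
  apply Finset.sum_eq_single (u.degree, v.degree)
  · rintro ⟨aa, bb⟩ hq hne
    have hor : aa ≠ u.degree ∨ bb ≠ v.degree := by
      by_contra hc
      push_neg at hc
      exact hne (Prod.ext hc.1 hc.2)
    rcases hor with hc | hc
    · rw [(aeval_homPart_isHomogeneous K hg f aa).coeff_eq_zero
        (fun hh => hc hh.symm), zero_mul]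
    · rw [(aeval_homPart_isHomogeneous K hg h bb).coeff_eq_zero
        (fun hh => hc hh.symm), mul_zero]
  · intro hmem
    exact absurd (Finset.HasAntidiagonal.mem_antidiagonal.mpr hd) hmem


def phiHom {g : Fin 2 → MvPolynomial (Fin 2) K} (hg : ∀ i, (g i).IsHomogeneous 1) :
    MvPowerSeries (Fin 2) K →ₐ[K] MvPowerSeries (Fin 2) K where
  toFun := phiFun K g
  map_one' := by
    have := phiFun_C K g 1
    simpa using this
  map_mul' := phiFun_mul K hg
  map_zero' := by
    have := phiFun_add K g 0 0
    simpa using this.symm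
  map_add' := phiFun_add K g
  commutes' := fun a => by
    have h : (algebraMap K (MvPowerSeries (Fin 2) K)) a = MvPowerSeries.C a := rfl
    rw [h]; exact phiFun_C K g a

lemma phiHom_apply {g : Fin 2 → MvPolynomial (Fin 2) K} (hg : ∀ i, (g i).IsHomogeneous 1)
    (f : MvPowerSeries (Fin 2) K) : phiHom K hg f = phiFun K g f := rfl

lemma phiFun_phiFun {g g' : Fin 2 → MvPolynomial (Fin 2) K}
    (hg' : ∀ i, (g' i).IsHomogeneous 1)
    (hcomp : ∀ p : MvPolynomial (Fin 2) K,
      MvPolynomial.aeval g (MvPolynomial.aeval g' p) = p)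
    (f : MvPowerSeries (Fin 2) K) :
    phiFun K g (phiFun K g' f) = f := by
  ext e
  rw [coeff_phiFun]
  have h1 : homPart K (phiFun K g' f) e.degree =
      MvPolynomial.aeval g' (homPart K f e.degree) := by
    ext e'
    rw [coeff_homPart]
    by_cases h : e'.degree = e.degree
    · rw [if_pos h, coeff_phiFun, h]
    · rw [if_neg h,
        ((aeval_homPart_isHomogeneous K hg' f e.degree).coeff_eq_zero h).symm]
  rw [h1, hcomp, coeff_homPart, if_pos rfl]

lemma aeval_aeval_id {g g' : Fin 2 → MvPolynomial (Fin 2) K}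
    (h : ∀ i, MvPolynomial.aeval g (g' i) = MvPolynomial.X i)
    (p : MvPolynomial (Fin 2) K) :
    MvPolynomial.aeval g (MvPolynomial.aeval g' p) = p := by
  have key : (MvPolynomial.aeval g : MvPolynomial (Fin 2) K →ₐ[K] _).comp
      (MvPolynomial.aeval g') = AlgHom.id K (MvPolynomial (Fin 2) K) := by
    apply MvPolynomial.algHom_ext
    intro i
    show MvPolynomial.aeval g (MvPolynomial.aeval g' (MvPolynomial.X i)) =
      (AlgHom.id K (MvPolynomial (Fin 2) K)) (MvPolynomial.X i)
    rw [MvPolynomial.aeval_X, h i, AlgHom.id_apply]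
  calc MvPolynomial.aeval g (MvPolynomial.aeval g' p)
      = ((MvPolynomial.aeval g : MvPolynomial (Fin 2) K →ₐ[K] _).comp
        (MvPolynomial.aeval g')) p := rfl
    _ = p := by rw [key]; rfl

def shearEquiv (g g' : Fin 2 → MvPolynomial (Fin 2) K)
    (hg : ∀ i, (g i).IsHomogeneous 1) (hg' : ∀ i, (g' i).IsHomogeneous 1)
    (h1 : ∀ i, MvPolynomial.aeval g (g' i) = MvPolynomial.X i)
    (h2 : ∀ i, MvPolynomial.aeval g' (g i) = MvPolynomial.X i) :
    MvPowerSeries (Fin 2) K ≃ₐ[K] MvPowerSeries (Fin 2) K :=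
  AlgEquiv.ofAlgHom (phiHom K hg) (phiHom K hg')
    (AlgHom.ext fun f => phiFun_phiFun K hg' (aeval_aeval_id K h1) f)
    (AlgHom.ext fun f => phiFun_phiFun K hg (aeval_aeval_id K h2) f)

lemma shearEquiv_apply (g g' : Fin 2 → MvPolynomial (Fin 2) K)
    (hg : ∀ i, (g i).IsHomogeneous 1) (hg' : ∀ i, (g' i).IsHomogeneous 1)
    (h1 : ∀ i, MvPolynomial.aeval g (g' i) = MvPolynomial.X i)
    (h2 : ∀ i, MvPolynomial.aeval g' (g i) = MvPolynomial.X i)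
    (f : MvPowerSeries (Fin 2) K) :
    shearEquiv K g g' hg hg' h1 h2 f = phiFun K g f := rfl

lemma emb2_inj {p q : ℕ × ℕ} (h : emb2 p = emb2 q) : p = q := by
  rw [emb2_eq_iff] at h; simpa using h

lemma X0X1_pow (k m : ℕ) :
    (MvPolynomial.X 0 : MvPolynomial (Fin 2) K) ^ k * MvPolynomial.X 1 ^ m =
      MvPolynomial.monomial (emb2 (k, m)) 1 := by
  rw [MvPolynomial.X_pow_eq_monomial, MvPolynomial.X_pow_eq_monomial,
    MvPolynomial.monomial_mul, one_mul]
  rfl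

lemma X0X1_pow_PS (k m : ℕ) :
    (MvPowerSeries.X 0 : MvPowerSeries (Fin 2) K) ^ k * MvPowerSeries.X 1 ^ m =
      MvPowerSeries.monomial (emb2 (k, m)) 1 := by
  rw [MvPowerSeries.X_pow_eq, MvPowerSeries.X_pow_eq,
    MvPowerSeries.monomial_mul_monomial, one_mul]
  rfl

lemma coeff_phiFun_monomial {g : Fin 2 → MvPolynomial (Fin 2) K}
    (hg : ∀ i, (g i).IsHomogeneous 1) (d e : Fin 2 →₀ ℕ) :
    MvPowerSeries.coeff e (phiFun K g (MvPowerSeries.monomial d 1)) =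
      MvPolynomial.coeff e (MvPolynomial.aeval g (MvPolynomial.monomial d (1 : K))) := by
  classical
  rw [coeff_phiFun]
  have h1 : homPart K (MvPowerSeries.monomial d 1) e.degree =
      if d.degree = e.degree then MvPolynomial.monomial d (1 : K) else 0 := by
    ext e'
    rw [coeff_homPart, MvPowerSeries.coeff_monomial]
    by_cases hde : d.degree = e.degree
    · rw [if_pos hde, MvPolynomial.coeff_monomial]
      by_cases h2 : e' = d
      · subst h2; simp [hde]
      · rw [if_neg h2, ite_self]
        rw [if_neg (fun hh => h2 hh.symm)]
    · rw [if_neg hde, MvPolynomial.coeff_zero]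
      by_cases h2 : e' = d
      · subst h2; rw [if_neg hde]
      · rw [if_neg h2, ite_self]
  rw [h1]
  by_cases h : d.degree = e.degree
  · rw [if_pos h]
  · rw [if_neg h, map_zero, MvPolynomial.coeff_zero]
    have hom := (MvPolynomial.isHomogeneous_monomial (d := d) (1 : K) rfl).aeval g hg
    rw [one_mul] at hom
    exact (hom.coeff_eq_zero (fun hh => h hh.symm)).symm

lemma coeff_shear1_monomial (a b i : ℕ) (hi : i ≤ a) :
    MvPolynomial.coeff (emb2 (i, a + b - i))
      (MvPolynomial.aeval ![MvPolynomial.X 0 + MvPolynomial.X 1, MvPolynomial.X 1]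
        (MvPolynomial.monomial (emb2 (a, b)) (1 : K))) = (a.choose i : K) := by
  classical
  rw [MvPolynomial.aeval_monomial, map_one, one_mul,
    Finsupp.prod_fintype _ _ (fun j => pow_zero _), Fin.prod_univ_two]
  simp only [emb2_apply0, emb2_apply1, Matrix.cons_val_zero, Matrix.cons_val_one,
    Matrix.head_cons]
  rw [add_pow, Finset.sum_mul, MvPolynomial.coeff_sum]
  have hterm : ∀ k : ℕ,
      (MvPolynomial.X 0 : MvPolynomial (Fin 2) K) ^ k * MvPolynomial.X 1 ^ (a - k) *
        (a.choose k : MvPolynomial (Fin 2) K) * MvPolynomial.X 1 ^ b =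
      MvPolynomial.C ((a.choose k : K)) *
        MvPolynomial.monomial (emb2 (k, a - k + b)) 1 := by
    intro k
    rw [← X0X1_pow, ← map_natCast (MvPolynomial.C : K →+* MvPolynomial (Fin 2) K)]
    ring
  simp only [hterm, MvPolynomial.coeff_C_mul, MvPolynomial.coeff_monomial]
  rw [Finset.sum_eq_single i]
  · rw [if_pos (show emb2 (i, a - i + b) = emb2 (i, a + b - i) by
      rw [show a - i + b = a + b - i by omega]), mul_one]
  · intro k hk hne
    rw [if_neg (fun hh => hne (Prod.ext_iff.mp
      (emb2_inj (p := (k, a - k + b)) (q := (i, a + b - i)) hh)).1), mul_zero]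
  · intro hmem
    exact absurd (Finset.mem_range.mpr (Nat.lt_succ_of_le hi)) hmem

lemma aeval_swap_monomial (a b : ℕ) :
    MvPolynomial.aeval ![MvPolynomial.X 1, MvPolynomial.X 0]
      (MvPolynomial.monomial (emb2 (a, b)) (1 : K)) =
      MvPolynomial.monomial (emb2 (b, a)) (1 : K) := by
  rw [MvPolynomial.aeval_monomial, map_one, one_mul,
    Finsupp.prod_fintype _ _ (fun j => pow_zero _), Fin.prod_univ_two]
  simp only [emb2_apply0, emb2_apply1, Matrix.cons_val_zero, Matrix.cons_val_one,
    Matrix.head_cons]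
  rw [mul_comm, X0X1_pow K b a]

lemma hom_shear1g : ∀ i : Fin 2,
    ((![MvPolynomial.X 0 + MvPolynomial.X 1, MvPolynomial.X 1] :
      Fin 2 → MvPolynomial (Fin 2) K) i).IsHomogeneous 1 := by
  intro i
  match i with
  | 0 => exact (MvPolynomial.isHomogeneous_X K 0).add (MvPolynomial.isHomogeneous_X K 1)
  | 1 => exact MvPolynomial.isHomogeneous_X K 1

lemma hom_shear1g' : ∀ i : Fin 2,
    ((![MvPolynomial.X 0 - MvPolynomial.X 1, MvPolynomial.X 1] :
      Fin 2 → MvPolynomial (Fin 2) K) i).IsHomogeneous 1 := by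
  intro i
  match i with
  | 0 => exact (MvPolynomial.isHomogeneous_X K 0).sub (MvPolynomial.isHomogeneous_X K 1)
  | 1 => exact MvPolynomial.isHomogeneous_X K 1

lemma hom_swapg : ∀ i : Fin 2,
    ((![MvPolynomial.X 1, MvPolynomial.X 0] :
      Fin 2 → MvPolynomial (Fin 2) K) i).IsHomogeneous 1 := by
  intro i
  match i with
  | 0 => exact MvPolynomial.isHomogeneous_X K 1
  | 1 => exact MvPolynomial.isHomogeneous_X K 0

def shear1E : MvPowerSeries (Fin 2) K ≃ₐ[K] MvPowerSeries (Fin 2) K :=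
  shearEquiv K ![MvPolynomial.X 0 + MvPolynomial.X 1, MvPolynomial.X 1]
    ![MvPolynomial.X 0 - MvPolynomial.X 1, MvPolynomial.X 1]
    (hom_shear1g K) (hom_shear1g' K)
    (by intro i; match i with
        | 0 => simp
        | 1 => simp)
    (by intro i; match i with
        | 0 => simp
        | 1 => simp)

def swapE : MvPowerSeries (Fin 2) K ≃ₐ[K] MvPowerSeries (Fin 2) K :=
  shearEquiv K ![MvPolynomial.X 1, MvPolynomial.X 0] ![MvPolynomial.X 1, MvPolynomial.X 0]
    (hom_swapg K) (hom_swapg K)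
    (by intro i; match i with
        | 0 => simp
        | 1 => simp)
    (by intro i; match i with
        | 0 => simp
        | 1 => simp)

lemma swapE_monomial (a b : ℕ) :
    swapE K (MvPowerSeries.monomial (emb2 (a, b)) 1) =
      MvPowerSeries.monomial (emb2 (b, a)) 1 := by
  ext e
  rw [show swapE K (MvPowerSeries.monomial (emb2 (a, b)) 1) =
      phiFun K ![MvPolynomial.X 1, MvPolynomial.X 0]
        (MvPowerSeries.monomial (emb2 (a, b)) 1) from rfl,
    coeff_phiFun_monomial K (hom_swapg K), aeval_swap_monomial,
    MvPolynomial.coeff_monomial, MvPowerSeries.coeff_monomial]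
  by_cases h : e = emb2 (b, a)
  · rw [if_pos h, if_pos h.symm]
  · rw [if_neg h, if_neg (fun hh => h hh.symm)]

lemma shear1E_coeff (a b i : ℕ) (hi : i ≤ a) :
    MvPowerSeries.coeff (emb2 (i, a + b - i))
      (shear1E K (MvPowerSeries.monomial (emb2 (a, b)) 1)) = (a.choose i : K) := by
  rw [show shear1E K (MvPowerSeries.monomial (emb2 (a, b)) 1) =
      phiFun K ![MvPolynomial.X 0 + MvPolynomial.X 1, MvPolynomial.X 1]
        (MvPowerSeries.monomial (emb2 (a, b)) 1) from rfl,
    coeff_phiFun_monomial K (hom_shear1g K), coeff_shear1_monomial K a b i hi]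

lemma monomial_mem_of_coeff_ne {S : Set (Fin 2 →₀ ℕ)} {I : Ideal (MvPowerSeries (Fin 2) K)}
    (hI : I = Ideal.span ((fun d => MvPowerSeries.monomial d (1 : K)) '' S))
    {f : MvPowerSeries (Fin 2) K} (hf : f ∈ I) {e : Fin 2 →₀ ℕ}
    (he : MvPowerSeries.coeff e f ≠ 0) :
    MvPowerSeries.monomial e 1 ∈ I := by
  classical
  have hf' : f ∈ Submodule.span (MvPowerSeries (Fin 2) K)
      ((fun d => MvPowerSeries.monomial d (1 : K)) '' S) := by
    rw [hI] at hf; exact hf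
  obtain ⟨c, hsupp, hsum⟩ := Submodule.mem_span_set.mp hf'
  have hce : MvPowerSeries.coeff e f =
      ∑ m ∈ c.support, MvPowerSeries.coeff e (c m * m) := by
    rw [← hsum, Finsupp.sum, map_sum]
    apply Finset.sum_congr rfl
    intro m _
    rw [smul_eq_mul]
  rw [hce] at he
  obtain ⟨m, hm, hne⟩ := Finset.exists_ne_zero_of_sum_ne_zero he
  obtain ⟨d, hdS, hdm⟩ := hsupp hm
  subst hdm
  -- get d ≤ e
  rw [MvPowerSeries.coeff_mul] at hne
  obtain ⟨uv, huv, hne2⟩ := Finset.exists_ne_zero_of_sum_ne_zero hne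
  have hvd : uv.2 = d := by
    by_contra hcon
    rw [MvPowerSeries.coeff_monomial, if_neg hcon, mul_zero] at hne2
    exact hne2 rfl
  have hde : d ≤ e := by
    rw [← Finset.HasAntidiagonal.mem_antidiagonal.mp huv, ← hvd]
    exact le_add_self
  have heq : MvPowerSeries.monomial e (1 : K) =
      MvPowerSeries.monomial (e - d) 1 * MvPowerSeries.monomial d 1 := by
    rw [MvPowerSeries.monomial_mul_monomial, one_mul, tsub_add_cancel_of_le hde]
  rw [heq]
  apply Ideal.mul_mem_left
  rw [hI]
  exact Ideal.subset_span ⟨d, hdS, rfl⟩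

lemma exists_monomial_mem {I : Ideal (MvPowerSeries (Fin 2) K)}
    {S : Set (Fin 2 →₀ ℕ)}
    (hI : I = Ideal.span ((fun d => MvPowerSeries.monomial d (1 : K)) '' S))
    (hfin : Module.Finite K (MvPowerSeries (Fin 2) K ⧸ I)) :
    ∃ e : Fin 2 →₀ ℕ, MvPowerSeries.monomial e 1 ∈ I := by
  classical
  have hnli : ¬ LinearIndependent K
      (fun n : ℕ => Ideal.Quotient.mk I (MvPowerSeries.X 0 ^ n)) :=
    Module.Finite.not_linearIndependent_of_infinite _
  rw [linearIndependent_iff'] at hnli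
  push_neg at hnli
  obtain ⟨s, g, hsum, n₀, hn₀s, hg⟩ := hnli
  set p : MvPowerSeries (Fin 2) K := ∑ n ∈ s, g n • MvPowerSeries.X 0 ^ n with hp
  have hpI : p ∈ I := by
    rw [← Ideal.Quotient.eq_zero_iff_mem]
    rw [hp, map_sum]
    rw [← hsum]
    apply Finset.sum_congr rfl
    intro n _
    rw [← Ideal.Quotient.mkₐ_eq_mk K, map_smul, Ideal.Quotient.mkₐ_eq_mk]
  have hcoeff : MvPowerSeries.coeff (Finsupp.single (0 : Fin 2) n₀) p = g n₀ := by
    rw [hp, map_sum]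
    have : ∀ n ∈ s, MvPowerSeries.coeff (Finsupp.single (0 : Fin 2) n₀)
        (g n • MvPowerSeries.X 0 ^ n) = if n = n₀ then g n else 0 := by
      intro n _
      rw [LinearMap.map_smul, MvPowerSeries.X_pow_eq, MvPowerSeries.coeff_monomial]
      by_cases h : n = n₀
      · subst h; rw [if_pos rfl, if_pos rfl, smul_eq_mul, mul_one]
      · rw [if_neg h, if_neg (fun hh => h (by
          have := DFunLike.congr_fun hh (0 : Fin 2)
          simpa using this.symm)), smul_zero]
    have h2 := Finset.sum_congr rfl this
    exact h2.trans (by rw [Finset.sum_ite_eq' s n₀ (fun n => g n), if_pos hn₀s])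
  exact ⟨Finsupp.single (0 : Fin 2) n₀, monomial_mem_of_coeff_ne K hI hpI (by rw [hcoeff]; exact hg)⟩

lemma emb2_add_single0 (i m : ℕ) :
    emb2 (i, m) + Finsupp.single (0 : Fin 2) 1 = emb2 (i + 1, m) := by
  ext j
  match j with
  | 0 => simp [Finsupp.single_apply]
  | 1 => simp [Finsupp.single_apply]

lemma emb2_add_single1 (i m : ℕ) :
    emb2 (i, m) + Finsupp.single (1 : Fin 2) 1 = emb2 (i, m + 1) := by
  ext j
  match j with
  | 0 => simp [Finsupp.single_apply]
  | 1 => simp [Finsupp.single_apply]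

lemma monomial_mem_pow (e : Fin 2 →₀ ℕ) :
    MvPowerSeries.monomial e 1 ∈
      (Ideal.span {MvPowerSeries.X 0, MvPowerSeries.X 1} :
        Ideal (MvPowerSeries (Fin 2) K)) ^ e.degree := by
  have h1 : MvPowerSeries.monomial e (1 : K) =
      MvPowerSeries.X 0 ^ (e 0) * MvPowerSeries.X 1 ^ (e 1) := by
    rw [X0X1_pow_PS, emb2_eta]
  rw [h1, degree_fin2, pow_add]
  exact Ideal.mul_mem_mul
    (Ideal.pow_mem_pow (Ideal.subset_span (by simp)) _)
    (Ideal.pow_mem_pow (Ideal.subset_span (by simp)) _)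

lemma span_pow_le (J : Ideal (MvPowerSeries (Fin 2) K)) (d : ℕ)
    (h : ∀ i ≤ d, MvPowerSeries.monomial (emb2 (i, d - i)) 1 ∈ J) :
    (Ideal.span {MvPowerSeries.X 0, MvPowerSeries.X 1} :
      Ideal (MvPowerSeries (Fin 2) K)) ^ d ≤ J := by
  induction d generalizing J with
  | zero =>
    rw [pow_zero, Ideal.one_eq_top, top_le_iff, Ideal.eq_top_iff_one]
    have h00 : emb2 (0, 0) = (0 : Fin 2 →₀ ℕ) := by
      ext j
      match j with
      | 0 => simp
      | 1 => simp
    have := h 0 le_rfl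
    rw [h00] at this
    simpa using this
  | succ d ih =>
    set J0 := (J.colon ((Ideal.span {MvPowerSeries.X 0} : Ideal (MvPowerSeries (Fin 2) K)) : Set (MvPowerSeries (Fin 2) K))) ⊓
      (J.colon ((Ideal.span {MvPowerSeries.X 1} : Ideal (MvPowerSeries (Fin 2) K)) : Set (MvPowerSeries (Fin 2) K))) with hJ0
    have hsub : (Ideal.span {MvPowerSeries.X 0, MvPowerSeries.X 1} :
        Ideal (MvPowerSeries (Fin 2) K)) ^ d ≤ J0 := by
      apply ih J0
      intro i hi
      rw [hJ0]
      apply Submodule.mem_inf.mpr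
      constructor
      · rw [Ideal.mem_colon_span_singleton]
        have hX : (MvPowerSeries.X 0 : MvPowerSeries (Fin 2) K) =
          MvPowerSeries.monomial (Finsupp.single (0 : Fin 2) 1) 1 := rfl
        rw [hX, MvPowerSeries.monomial_mul_monomial, one_mul, emb2_add_single0]
        have := h (i + 1) (by omega)
        rwa [show d + 1 - (i + 1) = d - i by omega] at this
      · rw [Ideal.mem_colon_span_singleton]
        have hX : (MvPowerSeries.X 1 : MvPowerSeries (Fin 2) K) =
          MvPowerSeries.monomial (Finsupp.single (1 : Fin 2) 1) 1 := rfl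
        rw [hX, MvPowerSeries.monomial_mul_monomial, one_mul, emb2_add_single1]
        have := h i (by omega)
        rwa [show d + 1 - i = d - i + 1 by omega] at this
    rw [pow_succ']
    apply Ideal.mul_le.mpr
    intro r hr s hs
    obtain ⟨aa, bb, hab⟩ := Ideal.mem_span_pair.mp hr
    obtain ⟨hs0, hs1⟩ := Submodule.mem_inf.mp (hsub hs)
    rw [Ideal.mem_colon_span_singleton] at hs0 hs1
    rw [← hab, show (aa * MvPowerSeries.X 0 + bb * MvPowerSeries.X 1) * s =
      aa * (s * MvPowerSeries.X 0) + bb * (s * MvPowerSeries.X 1) by ring]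
    exact Ideal.add_mem J (Ideal.mul_mem_left J aa hs0) (Ideal.mul_mem_left J bb hs1)


end




/-- Let `K` have characteristic zero and `R = K[[x,y]]`.  A monomial ideal
`I ⊆ R` of finite colength which is fixed by every `K`-algebra automorphism of `R` is a
power of the maximal ideal `(x,y)`. -/
theorem automorphism_invariant_monomial_ideal_eq_pow_maximalIdeal
    (K : Type*) [Field K] [CharZero K]
    (I : Ideal (MvPowerSeries (Fin 2) K))
    (hmono : ∃ S : Set (Fin 2 →₀ ℕ),
      I = Ideal.span ((fun d => MvPowerSeries.monomial d (1 : K)) '' S))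
    (hfin : Module.Finite K (MvPowerSeries (Fin 2) K ⧸ I))
    (hinv : ∀ σ : MvPowerSeries (Fin 2) K ≃ₐ[K] MvPowerSeries (Fin 2) K,
      Ideal.map σ I = I) :
    ∃ d : ℕ,
      I = (Ideal.span {MvPowerSeries.X 0, MvPowerSeries.X 1} :
        Ideal (MvPowerSeries (Fin 2) K)) ^ d := by
  classical
  obtain ⟨S, hS⟩ := hmono
  obtain ⟨e₀, he₀⟩ := exists_monomial_mem K hS hfin
  have hT : ∃ n : ℕ, ∃ e : Fin 2 →₀ ℕ, e.degree = n ∧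
      MvPowerSeries.monomial e 1 ∈ I := ⟨e₀.degree, e₀, rfl, he₀⟩
  set d := Nat.find hT with hd
  have step1 : ∀ a b i : ℕ, i ≤ a →
      MvPowerSeries.monomial (emb2 (a, b)) 1 ∈ I →
      MvPowerSeries.monomial (emb2 (i, a + b - i)) 1 ∈ I := by
    intro a b i hi hmem
    have h1 : shear1E K (MvPowerSeries.monomial (emb2 (a, b)) 1) ∈ I := by
      rw [← hinv (shear1E K)]
      exact Ideal.mem_map_of_mem _ hmem
    apply monomial_mem_of_coeff_ne K hS h1
    rw [shear1E_coeff K a b i hi]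
    exact Nat.cast_ne_zero.mpr (Nat.choose_pos hi).ne'
  have step2 : ∀ a b : ℕ,
      MvPowerSeries.monomial (emb2 (a, b)) 1 ∈ I →
      MvPowerSeries.monomial (emb2 (b, a)) 1 ∈ I := by
    intro a b hmem
    rw [← swapE_monomial K a b, ← hinv (swapE K)]
    exact Ideal.mem_map_of_mem _ hmem
  have hall : ∀ i ≤ d, MvPowerSeries.monomial (emb2 (i, d - i)) 1 ∈ I := by
    obtain ⟨e, hdeg, hm⟩ := Nat.find_spec hT
    intro i hi
    have he' : emb2 (e 0, e 1) = e := emb2_eta e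
    have hd2 : e 0 + e 1 = d := by rw [← degree_fin2]; exact hdeg
    have hma : MvPowerSeries.monomial (emb2 (e 0, e 1)) 1 ∈ I := by
      rw [he']; exact hm
    by_cases hia : i ≤ e 0
    · have h3 := step1 (e 0) (e 1) i hia hma
      rwa [hd2] at h3
    · push_neg at hia
      have hj : d - i ≤ e 1 := by omega
      have hmb := step2 (e 0) (e 1) hma
      have h4 := step1 (e 1) (e 0) (d - i) hj hmb
      have h5 : e 1 + e 0 - (d - i) = i := by omega
      rw [h5] at h4
      exact step2 (d - i) i h4
  refine ⟨d, le_antisymm ?_ (span_pow_le K I d hall)⟩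
  rw [hS, Ideal.span_le]
  rintro x ⟨e, heS, rfl⟩
  have hmemI : MvPowerSeries.monomial e 1 ∈ I := by
    rw [hS]; exact Ideal.subset_span ⟨e, heS, rfl⟩
  have hdle : d ≤ e.degree := Nat.find_min' hT ⟨e, rfl, hmemI⟩
  exact Ideal.pow_le_pow_right hdle (monomial_mem_pow K e)
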